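/- In the multi-variable Sl(2)-orbit setting: let L ∈ ℝ, let r ∈ ℝ^m satisfy r_i ≥ 1 for all i, and let v ∈ Λ satisfy the tadpole bound L at r. If ℓ ∈ ℤ^m is a weight with w_ℓ(r) > L/λ², then P_ℓ v = 0; if moreover v is self-dual at r, then also P_{−ℓ} v = 0. (The 'heavy region' vanishing of flux components, Step 2 of the proof of Theorem 4, in the Sl(2)-orbit approximation.) -/

import Mathlib

/-- Multi-variable Sl(2)-orbit setting, 'heavy region' vanishing: if `v ∈ Λ` satisfies
the tadpole bound `L` at growth-sector coordinates `r` (all `r i ≥ 1`) and the weight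
`ℓ` satisfies `w_ℓ(r) = ∏ i, r i ^ ℓ i > L / λ²`, then `P_ℓ v = 0`; if moreover `v` is
self-dual at `r`, then also `P_{-ℓ} v = 0`. -/
theorem heavy_region_vanishing
    (V : Type*) [NormedAddCommGroup V] [InnerProductSpace ℝ V] [FiniteDimensional ℝ V]
    (m : ℕ)
    -- the orthogonal weight decomposition V = ⊕_{ℓ ∈ ℤ^m} V_ℓ, via its projections P ℓ
    (P : (Fin m → ℤ) → (V →ₗ[ℝ] V))
    (hPfin : (Function.support P).Finite)
    (hPsum : ∀ v : V, ∑ᶠ ℓ : Fin m → ℤ, P ℓ v = v)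
    (hPproj : ∀ (ℓ : Fin m → ℤ) (v : V), P ℓ (P ℓ v) = P ℓ v)
    (hPorth : ∀ ℓ ℓ' : Fin m → ℤ, ℓ ≠ ℓ' → ∀ u w : V, (inner ℝ (P ℓ u) (P ℓ' w) : ℝ) = 0)
    -- the boundary Weil operator C, a linear isometry with C(V_ℓ) = V_{-ℓ}
    (C : V →ₗ[ℝ] V)
    (hCiso : ∀ v : V, ‖C v‖ = ‖v‖)
    (hCw : ∀ ℓ : Fin m → ℤ,
      Submodule.map C (LinearMap.range (P ℓ)) = LinearMap.range (P (-ℓ)))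
    -- the flux lattice Λ and the integrality gap λ
    (Λ : AddSubgroup V)
    (lam : ℝ) (hlam : 0 < lam)
    (hgap : ∀ v ∈ Λ, ∀ ℓ : Fin m → ℤ, P ℓ v = 0 ∨ lam ≤ ‖P ℓ v‖)
    -- the hypotheses of the statement
    (L : ℝ) (r : Fin m → ℝ) (hr : ∀ i, 1 ≤ r i)
    (v : V) (hv : v ∈ Λ)
    (htad : ∑ᶠ ℓ : Fin m → ℤ, (∏ i, r i ^ ℓ i) * ‖P ℓ v‖ ^ 2 ≤ L)
    (ℓ : Fin m → ℤ) (hheavy : L / lam ^ 2 < ∏ i, r i ^ ℓ i) :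
    P ℓ v = 0 ∧
      ((∀ ℓ' : Fin m → ℤ, (∏ i, r i ^ ℓ' i) • P ℓ' v = C (P (-ℓ') v)) →
        P (-ℓ) v = 0) := by

  have hwpos : ∀ ℓ' : Fin m → ℤ, 0 < ∏ i, r i ^ ℓ' i := by
    intro ℓ'
    exact Finset.prod_pos fun i _ => zpow_pos (lt_of_lt_of_le one_pos (hr i)) _
  have hnn : ∀ ℓ' : Fin m → ℤ, 0 ≤ (∏ i, r i ^ ℓ' i) * ‖P ℓ' v‖ ^ 2 := by
    intro ℓ'
    exact mul_nonneg (hwpos ℓ').le (by positivity)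
  have hsupp : (Function.support fun ℓ' : Fin m → ℤ =>
      (∏ i, r i ^ ℓ' i) * ‖P ℓ' v‖ ^ 2) ⊆ Function.support P := by
    intro ℓ' h
    simp only [Function.mem_support] at h ⊢
    intro hP
    apply h
    rw [hP]
    simp
  have hterm : ∀ ℓ' : Fin m → ℤ,
      (∏ i, r i ^ ℓ' i) * ‖P ℓ' v‖ ^ 2 ≤ L := by
    intro ℓ'
    exact le_trans (single_le_finsum ℓ' (hPfin.subset hsupp) hnn) htad
  have key : P ℓ v = 0 := by
    rcases hgap v hv ℓ with h | h
    · exact h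
    · exfalso
      have h1 : (∏ i, r i ^ ℓ i) * lam ^ 2 ≤ (∏ i, r i ^ ℓ i) * ‖P ℓ v‖ ^ 2 :=
        mul_le_mul_of_nonneg_left (pow_le_pow_left₀ hlam.le h 2) (hwpos ℓ).le
      have h2 : (∏ i, r i ^ ℓ i) * lam ^ 2 ≤ L := le_trans h1 (hterm ℓ)
      have h3 : (∏ i, r i ^ ℓ i) ≤ L / lam ^ 2 :=
        (le_div_iff₀ (by positivity)).mpr h2
      exact absurd h3 (not_le.mpr hheavy)
  refine ⟨key, fun hsd => ?_⟩
  have := hsd (-ℓ)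
  rw [neg_neg, key, map_zero] at this
  have hw := hwpos (-ℓ)
  exact (smul_eq_zero.mp this).resolve_left (by positivity)
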